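/- Let (X, ℬ) be a measurable space, κ a sub-Markov transition kernel on X, m a conservative reversible probability measure for κ, and ρ : X → [0, ∞) a bounded measurable function with ∫_X ρ dm = 1. Then the probability measure ρ·m is conservative and reversible for κ if and only if ρ(x₀) = ρ(x₁) for σ_m-almost every pair (x₀, x₁) ∈ X × X. -/

import Mathlib

open MeasureTheory ProbabilityTheory

variable {X : Type*} [MeasurableSpace X]

/-- A function is bounded measurable. -/
def BddMeasurable {X : Type*} [MeasurableSpace X] (f : X → ℝ) : Prop :=
  Measurable f ∧ ∃ C : ℝ, ∀ x, |f x| ≤ C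

/-- The transition operator `T f (x) = ∫ f(y) κ(x, dy)`. -/
noncomputable def Tker {X : Type*} [MeasurableSpace X] (κ : Kernel X X) (f : X → ℝ) :
    X → ℝ :=
  fun x => ∫ y, f y ∂(κ x)

/-- `m` is an invariant measure: `∫ T f dm = ∫ f dm` for all bounded measurable `f`. -/
def IsInvariantMeas {X : Type*} [MeasurableSpace X] (κ : Kernel X X) (m : Measure X) : Prop :=
  ∀ f : X → ℝ, BddMeasurable f → ∫ x, Tker κ f x ∂m = ∫ x, f x ∂m

/-- `m` is a reversible measure: `∫ (T f) g dm = ∫ f (T g) dm`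
for all bounded measurable `f, g`. -/
def IsReversibleMeas {X : Type*} [MeasurableSpace X] (κ : Kernel X X) (m : Measure X) : Prop :=
  ∀ f g : X → ℝ, BddMeasurable f → BddMeasurable g →
    ∫ x, Tker κ f x * g x ∂m = ∫ x, f x * Tker κ g x ∂m

/-- `m` is a conservative measure: `∫ (T 1) g dm = ∫ g dm`
for all bounded measurable `g`, where `T 1 (x) = κ(x, X)`. -/
def IsConservativeMeas {X : Type*} [MeasurableSpace X] (κ : Kernel X X) (m : Measure X) :
    Prop :=
  ∀ g : X → ℝ, BddMeasurable g → ∫ x, (κ x Set.univ).toReal * g x ∂m = ∫ x, g x ∂m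

/-- `m` is an extreme element of a set `C` of measures: `m ∈ C` and whenever
`m = (1 - t) • m₀ + t • m₁` with `t ∈ (0,1)` and `m₀, m₁ ∈ C`, one has `m₀ = m₁`. -/
def IsExtremeElem {X : Type*} [MeasurableSpace X] (C : Set (Measure X)) (m : Measure X) :
    Prop :=
  m ∈ C ∧ ∀ t : ℝ, t ∈ Set.Ioo (0 : ℝ) 1 → ∀ m₀ m₁ : Measure X, m₀ ∈ C → m₁ ∈ C →
    m = ENNReal.ofReal (1 - t) • m₀ + ENNReal.ofReal t • m₁ → m₀ = m₁

section AuxProof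

lemma BddMeasurable.bound_nonneg {X : Type*} [MeasurableSpace X] {f : X → ℝ}
    (hf : BddMeasurable f) : ∃ C : ℝ, 0 ≤ C ∧ ∀ x, |f x| ≤ C := by
  obtain ⟨-, C, hC⟩ := hf
  exact ⟨max C 0, le_max_right _ _, fun x => (hC x).trans (le_max_left _ _)⟩

lemma BddMeasurable.integrable {Y : Type*} [MeasurableSpace Y] {μ : Measure Y}
    [IsFiniteMeasure μ] {f : Y → ℝ} (hf : BddMeasurable f) : Integrable f μ := by
  obtain ⟨C, -, hC⟩ := hf.bound_nonneg
  exact ⟨hf.1.aestronglyMeasurable,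
    HasFiniteIntegral.of_bounded (C := C) (Filter.Eventually.of_forall fun y => by
      simpa [Real.norm_eq_abs] using hC y)⟩

lemma BddMeasurable.mul {X : Type*} [MeasurableSpace X] {f g : X → ℝ}
    (hf : BddMeasurable f) (hg : BddMeasurable g) :
    BddMeasurable (fun x => f x * g x) := by
  obtain ⟨Cf, hCf0, hCf⟩ := hf.bound_nonneg
  obtain ⟨Cg, hCg0, hCg⟩ := hg.bound_nonneg
  refine ⟨hf.1.mul hg.1, Cf * Cg, fun x => ?_⟩
  rw [abs_mul]
  exact mul_le_mul (hCf x) (hCg x) (abs_nonneg _) hCf0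

lemma BddMeasurable.comp_fst {X : Type*} [MeasurableSpace X] {f : X → ℝ}
    (hf : BddMeasurable f) : BddMeasurable (fun p : X × X => f p.1) :=
  ⟨hf.1.comp measurable_fst, hf.2.imp fun _ hC p => hC p.1⟩

lemma BddMeasurable.comp_snd {X : Type*} [MeasurableSpace X] {f : X → ℝ}
    (hf : BddMeasurable f) : BddMeasurable (fun p : X × X => f p.2) :=
  ⟨hf.1.comp measurable_snd, hf.2.imp fun _ hC p => hC p.2⟩

lemma BddMeasurable.tker {X : Type*} [MeasurableSpace X] (κ : Kernel X X) [IsFiniteKernel κ]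
    (hκ : ∀ x, κ x Set.univ ≤ 1) {f : X → ℝ} (hf : BddMeasurable f) :
    BddMeasurable (Tker κ f) := by
  obtain ⟨C, hC0, hC⟩ := hf.bound_nonneg
  constructor
  · exact ((hf.1.comp measurable_snd).stronglyMeasurable.integral_kernel_prod_right'
      (κ := κ)).measurable
  · refine ⟨C, fun x => ?_⟩
    have h1 : ‖∫ y, f y ∂(κ x)‖ ≤ C * ((κ x) Set.univ).toReal :=
      norm_integral_le_of_norm_le_const (Filter.Eventually.of_forall fun y => by
        simpa [Real.norm_eq_abs] using hC y)
    have h2 : ((κ x) Set.univ).toReal ≤ 1 := by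
      rw [show (1 : ℝ) = (1 : ENNReal).toReal by simp]
      exact ENNReal.toReal_mono (by simp) (hκ x)
    calc |Tker κ f x| = ‖∫ y, f y ∂(κ x)‖ := by rw [Real.norm_eq_abs]; rfl
    _ ≤ C * ((κ x) Set.univ).toReal := h1
    _ ≤ C := mul_le_of_le_one_right hC0 h2

lemma integral_compProd_of_bdd {X : Type*} [MeasurableSpace X] (κ : Kernel X X) [IsFiniteKernel κ]
    (m : Measure X) [IsFiniteMeasure m] {F : X × X → ℝ} (hF : BddMeasurable F) :
    ∫ p, F p ∂(m.compProd κ) = ∫ x, ∫ y, F (x, y) ∂(κ x) ∂m :=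
  Measure.integral_compProd hF.integrable

lemma integral_withDensity_ofReal {X : Type*} [MeasurableSpace X] {m : Measure X}
    {ρ : X → ℝ} (hρm : Measurable ρ) (hρ0 : ∀ x, 0 ≤ ρ x) (h : X → ℝ) :
    ∫ x, h x ∂(m.withDensity fun x => ENNReal.ofReal (ρ x)) = ∫ x, ρ x * h x ∂m := by
  have e : (fun x => ENNReal.ofReal (ρ x)) = fun x => ((Real.toNNReal (ρ x) : NNReal) : ENNReal) :=
    rfl
  rw [e, integral_withDensity_eq_integral_smul hρm.real_toNNReal h]
  refine integral_congr_ae (Filter.Eventually.of_forall fun x => ?_)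
  simp [NNReal.smul_def, Real.coe_toNNReal _ (hρ0 x)]

section transfer
variable {X : Type*} [MeasurableSpace X] (κ : Kernel X X) [IsFiniteKernel κ]
  (m : Measure X) [IsFiniteMeasure m]

lemma E1 {f g : X → ℝ} (hf : BddMeasurable f) (hg : BddMeasurable g) :
    ∫ x, Tker κ f x * g x ∂m = ∫ p, f p.2 * g p.1 ∂(m.compProd κ) := by
  rw [integral_compProd_of_bdd κ m (hf.comp_snd.mul hg.comp_fst)]
  refine integral_congr_ae (Filter.Eventually.of_forall fun x => ?_)
  simp only
  rw [integral_mul_const]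
  rfl

lemma E2 {f g : X → ℝ} (hf : BddMeasurable f) (hg : BddMeasurable g) :
    ∫ x, f x * Tker κ g x ∂m = ∫ p, f p.1 * g p.2 ∂(m.compProd κ) := by
  rw [integral_compProd_of_bdd κ m (hf.comp_fst.mul hg.comp_snd)]
  refine integral_congr_ae (Filter.Eventually.of_forall fun x => ?_)
  simp only
  rw [integral_const_mul]
  rfl

lemma E3 {h : X → ℝ} (hh : BddMeasurable h) :
    ∫ p, h p.1 ∂(m.compProd κ) = ∫ x, ((κ x) Set.univ).toReal * h x ∂m := by
  rw [integral_compProd_of_bdd κ m hh.comp_fst]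
  refine integral_congr_ae (Filter.Eventually.of_forall fun x => ?_)
  simp only [integral_const, smul_eq_mul]
  rfl

end transfer

lemma BddMeasurable.sub {X : Type*} [MeasurableSpace X] {f g : X → ℝ}
    (hf : BddMeasurable f) (hg : BddMeasurable g) :
    BddMeasurable (fun x => f x - g x) := by
  obtain ⟨Cf, hCf0, hCf⟩ := hf.bound_nonneg
  obtain ⟨Cg, hCg0, hCg⟩ := hg.bound_nonneg
  exact ⟨hf.1.sub hg.1, Cf + Cg, fun x => (abs_sub _ _).trans (add_le_add (hCf x) (hCg x))⟩

theorem aux_main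
    {X : Type*} [MeasurableSpace X]
    (κ : Kernel X X) [IsFiniteKernel κ] (hκ : ∀ x, κ x Set.univ ≤ 1)
    (m : Measure X) [IsProbabilityMeasure m]
    (hcon : ∀ g : X → ℝ, BddMeasurable g →
      ∫ x, (κ x Set.univ).toReal * g x ∂m = ∫ x, g x ∂m)
    (hrev : ∀ f g : X → ℝ, BddMeasurable f → BddMeasurable g →
      ∫ x, Tker κ f x * g x ∂m = ∫ x, f x * Tker κ g x ∂m)
    (ρ : X → ℝ) (hρ0 : ∀ x, 0 ≤ ρ x) (hρ : BddMeasurable ρ)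
    (hρ1 : ∫ x, ρ x ∂m = 1) :
    ((∀ g : X → ℝ, BddMeasurable g →
        ∫ x, (κ x Set.univ).toReal * g x ∂(m.withDensity fun x => ENNReal.ofReal (ρ x)) =
          ∫ x, g x ∂(m.withDensity fun x => ENNReal.ofReal (ρ x))) ∧
      (∀ f g : X → ℝ, BddMeasurable f → BddMeasurable g →
        ∫ x, Tker κ f x * g x ∂(m.withDensity fun x => ENNReal.ofReal (ρ x)) =
          ∫ x, f x * Tker κ g x ∂(m.withDensity fun x => ENNReal.ofReal (ρ x)))) ↔
      (∀ᵐ p : X × X ∂(m.compProd κ), ρ p.1 = ρ p.2) := by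
  have hρm := hρ.1
  have hwd : ∀ h : X → ℝ,
      ∫ x, h x ∂(m.withDensity fun x => ENNReal.ofReal (ρ x)) = ∫ x, ρ x * h x ∂m :=
    fun h => integral_withDensity_ofReal hρm hρ0 h
  have hone : BddMeasurable (fun _ : X => (1 : ℝ)) := ⟨measurable_const, 1, by simp⟩
  have hρ2 : BddMeasurable (fun x => ρ x * ρ x) := hρ.mul hρ
  have hT1 : Tker κ (fun _ => (1 : ℝ)) = fun x => ((κ x) Set.univ).toReal := by
    funext x; simp [Tker]; rfl
  have hconρ2 : ∫ x, ((κ x) Set.univ).toReal * (ρ x * ρ x) ∂m = ∫ x, ρ x * ρ x ∂m :=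
    hcon _ hρ2
  constructor
  · rintro ⟨-, hrevν⟩
    have hA : ∫ p, ρ p.1 * ρ p.1 ∂(m.compProd κ) = ∫ x, ρ x * ρ x ∂m := by
      rw [E3 κ m hρ2]; exact hconρ2
    have hB : ∫ p, ρ p.1 * ρ p.2 ∂(m.compProd κ) = ∫ x, ρ x * ρ x ∂m := by
      rw [← E2 κ m hρ hρ]
      have h1 := hrevν ρ (fun _ => 1) hρ hone
      simp only [hT1] at h1
      rw [hwd, hwd] at h1
      calc ∫ x, ρ x * Tker κ ρ x ∂m
          = ∫ x, ρ x * (Tker κ ρ x * 1) ∂m := by simp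
        _ = ∫ x, ρ x * (ρ x * ((κ x) Set.univ).toReal) ∂m := h1
        _ = ∫ x, ((κ x) Set.univ).toReal * (ρ x * ρ x) ∂m :=
            integral_congr_ae (Filter.Eventually.of_forall fun x => by ring)
        _ = ∫ x, ρ x * ρ x ∂m := hconρ2
    have hC : ∫ p, ρ p.2 * ρ p.2 ∂(m.compProd κ) = ∫ x, ρ x * ρ x ∂m := by
      calc ∫ p : X × X, ρ p.2 * ρ p.2 ∂(m.compProd κ)
          = ∫ p : X × X, (ρ p.2 * ρ p.2) * (fun _ : X => (1:ℝ)) p.1 ∂(m.compProd κ) := by simp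
        _ = ∫ x, Tker κ (fun y => ρ y * ρ y) x * (fun _ : X => (1:ℝ)) x ∂m :=
            (E1 κ m hρ2 hone).symm
        _ = ∫ x, (ρ x * ρ x) * Tker κ (fun _ => (1:ℝ)) x ∂m := hrev _ _ hρ2 hone
        _ = ∫ x, ((κ x) Set.univ).toReal * (ρ x * ρ x) ∂m := by
            simp only [hT1]
            exact integral_congr_ae (Filter.Eventually.of_forall fun x => by ring)
        _ = ∫ x, ρ x * ρ x ∂m := hconρ2
    have i1 : Integrable (fun p : X × X => ρ p.1 * ρ p.1) (m.compProd κ) :=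
      (hρ.comp_fst.mul hρ.comp_fst).integrable
    have i2 : Integrable (fun p : X × X => ρ p.1 * ρ p.2) (m.compProd κ) :=
      (hρ.comp_fst.mul hρ.comp_snd).integrable
    have i3 : Integrable (fun p : X × X => ρ p.2 * ρ p.2) (m.compProd κ) :=
      (hρ.comp_snd.mul hρ.comp_snd).integrable
    have hIbdd : BddMeasurable (fun p : X × X => (ρ p.1 - ρ p.2) * (ρ p.1 - ρ p.2)) :=
      (hρ.comp_fst.sub hρ.comp_snd).mul (hρ.comp_fst.sub hρ.comp_snd)
    have hI : ∫ p, (ρ p.1 - ρ p.2) * (ρ p.1 - ρ p.2) ∂(m.compProd κ) = 0 := by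
      have e : (fun p : X × X => (ρ p.1 - ρ p.2) * (ρ p.1 - ρ p.2))
          = fun p => (ρ p.1 * ρ p.1 - 2 * (ρ p.1 * ρ p.2)) + ρ p.2 * ρ p.2 := by
        funext p; ring
      have i12 : Integrable (fun p : X × X => ρ p.1 * ρ p.1 - 2 * (ρ p.1 * ρ p.2))
          (m.compProd κ) := i1.sub (i2.const_mul 2)
      rw [e, integral_add i12 i3, integral_sub i1 (i2.const_mul 2),
        MeasureTheory.integral_const_mul, hA, hB, hC]
      ring
    have h0 := (integral_eq_zero_iff_of_nonneg
      (f := fun p : X × X => (ρ p.1 - ρ p.2) * (ρ p.1 - ρ p.2)) (μ := m.compProd κ)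
      (fun p => mul_self_nonneg _) hIbdd.integrable).mp hI
    filter_upwards [h0] with p hp
    have : ρ p.1 - ρ p.2 = 0 := mul_self_eq_zero.mp hp
    linarith
  · intro hae
    constructor
    · intro g hg
      rw [hwd (fun x => ((κ x) Set.univ).toReal * g x), hwd g]
      calc ∫ x, ρ x * (((κ x) Set.univ).toReal * g x) ∂m
          = ∫ x, ((κ x) Set.univ).toReal * (ρ x * g x) ∂m :=
            integral_congr_ae (Filter.Eventually.of_forall fun x => by ring)
        _ = ∫ x, ρ x * g x ∂m := hcon _ (hρ.mul hg)
    · intro f g hf hg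
      rw [hwd (fun x => Tker κ f x * g x), hwd (fun x => f x * Tker κ g x)]
      calc ∫ x, ρ x * (Tker κ f x * g x) ∂m
          = ∫ x, Tker κ f x * (g x * ρ x) ∂m :=
            integral_congr_ae (Filter.Eventually.of_forall fun x => by ring)
        _ = ∫ p, f p.2 * (g p.1 * ρ p.1) ∂(m.compProd κ) := E1 κ m hf (hg.mul hρ)
        _ = ∫ p, (f p.2 * ρ p.2) * g p.1 ∂(m.compProd κ) := by
            refine integral_congr_ae ?_
            filter_upwards [hae] with p hp
            rw [← hp]; ring
        _ = ∫ x, Tker κ (fun y => f y * ρ y) x * g x ∂m := (E1 κ m (hf.mul hρ) hg).symm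
        _ = ∫ x, (f x * ρ x) * Tker κ g x ∂m := hrev _ g (hf.mul hρ) hg
        _ = ∫ x, ρ x * (f x * Tker κ g x) ∂m :=
            integral_congr_ae (Filter.Eventually.of_forall fun x => by ring)


end AuxProof

/-- Remark: `ρ·m` is conservative and reversible if and only if `ρ(x₀) = ρ(x₁)` for
σ_m-almost every pair `(x₀, x₁)`. -/
theorem remark_density_iff_ae_constant_on_pairs
    (κ : Kernel X X) [IsFiniteKernel κ] (hκ : ∀ x, κ x Set.univ ≤ 1)
    (m : Measure X) [IsProbabilityMeasure m]
    (hcon : IsConservativeMeas κ m) (hrev : IsReversibleMeas κ m)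
    (ρ : X → ℝ) (hρ0 : ∀ x, 0 ≤ ρ x) (hρ : BddMeasurable ρ)
    (hρ1 : ∫ x, ρ x ∂m = 1) :
    (IsConservativeMeas κ (m.withDensity fun x => ENNReal.ofReal (ρ x)) ∧
        IsReversibleMeas κ (m.withDensity fun x => ENNReal.ofReal (ρ x))) ↔
      (∀ᵐ p : X × X ∂(m.compProd κ), ρ p.1 = ρ p.2) := by
  exact aux_main κ hκ m hcon hrev ρ hρ0 hρ hρ1
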